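/- Let X be a random vector in ℝ^d with density p satisfying E|X|² = d and sup_x p(x) ≤ M for some constant M ≥ (2π)^{-d/2}. Then the relative entropy to the standard Gaussian satisfies D(X‖Z) ≥ Δ²/(2M), where Δ = ‖p − φ‖₂. -/

import Mathlib

open Real MeasureTheory

-- scalar lemma A : for 0 < t ≤ 1
lemma lemA {t : ℝ} (ht : 0 < t) (ht1 : t ≤ 1) :
    (t - 1)^2/2 ≤ t * Real.log t - t + 1 := by
  rcases eq_or_lt_of_le ht1 with h|h
  · subst h; simp
  have hg : ∀ x : ℝ, x ≠ 0 →
      HasDerivAt (fun y => y * Real.log y - y + 1 - (y-1)^2/2) (Real.log x - (x - 1)) x := by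
    intro x hx
    have h1 := Real.hasDerivAt_mul_log hx
    have h2 : HasDerivAt (fun y : ℝ => (y-1)^2/2) (x - 1) x := by
      have := (((hasDerivAt_id x).sub_const 1).pow 2).div_const 2
      convert this using 1 <;> (try rfl) <;> simp [id] <;> try ring
    have := ((h1.sub (hasDerivAt_id x)).add_const 1).sub h2
    convert this using 1 <;> (try rfl) <;> simp [id] <;> try ring
  have hanti : AntitoneOn (fun y => y * Real.log y - y + 1 - (y-1)^2/2) (Set.Icc t 1) := by
    apply antitoneOn_of_deriv_nonpos (convex_Icc t 1)
    · apply ContinuousOn.mono (s := Set.Icc t 1) ?_ le_rfl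
      intro x hx
      exact ((hg x (by rcases hx with ⟨h1,_⟩; linarith)).continuousAt).continuousWithinAt
    · intro x hx
      rw [interior_Icc] at hx
      exact ((hg x (by rcases hx with ⟨h1,_⟩; linarith)).differentiableAt).differentiableWithinAt
    · intro x hx
      rw [interior_Icc] at hx
      rcases hx with ⟨h1, h2⟩
      rw [(hg x (by linarith)).deriv]
      have := Real.log_le_sub_one_of_pos (show 0 < x by linarith)
      linarith
  have := hanti (Set.mem_Icc.2 ⟨le_rfl, ht1⟩) (Set.mem_Icc.2 ⟨ht1, le_rfl⟩) ht1
  simp at this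
  linarith

-- scalar lemma B : for t ≥ 1
lemma lemB {t : ℝ} (ht : 1 ≤ t) :
    (t - 1)^2/(2*t) ≤ t * Real.log t - t + 1 := by
  have hg : ∀ x : ℝ, 0 < x →
      HasDerivAt (fun y => y * Real.log y - y + 1 - (y-1)^2/(2*y))
        (Real.log x - (2*(x-1)*(2*x) - (x-1)^2*2)/((2*x)^2)) x := by
    intro x hx
    have h1 := Real.hasDerivAt_mul_log hx.ne'
    have hnum : HasDerivAt (fun y : ℝ => (y-1)^2) (2*(x-1)) x := by
      have := ((hasDerivAt_id x).sub_const 1).pow 2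
      convert this using 1 <;> (try rfl) <;> simp [id] <;> try ring
    have hden : HasDerivAt (fun y : ℝ => 2*y) (2 : ℝ) x := by
      simpa using (hasDerivAt_id x).const_mul 2
    have h2 := hnum.div hden (by positivity)
    have := ((h1.sub (hasDerivAt_id x)).add_const 1).sub h2
    convert this using 1 <;> (try rfl) <;> ring
  have hmono : MonotoneOn (fun y => y * Real.log y - y + 1 - (y-1)^2/(2*y)) (Set.Icc 1 t) := by
    apply monotoneOn_of_deriv_nonneg (convex_Icc 1 t)
    · intro x hx
      exact ((hg x (by rcases hx with ⟨h1,_⟩; linarith)).continuousAt).continuousWithinAt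
    · intro x hx
      rw [interior_Icc] at hx
      exact ((hg x (by rcases hx with ⟨h1,_⟩; linarith)).differentiableAt).differentiableWithinAt
    · intro x hx
      rw [interior_Icc] at hx
      rcases hx with ⟨h1, h2⟩
      have hx0 : (0:ℝ) < x := by linarith
      rw [(hg x hx0).deriv]
      have hlog := Real.one_sub_inv_le_log_of_pos hx0
      have he : (2*(x-1)*(2*x) - (x-1)^2*2)/((2*x)^2)
          = 1 - x⁻¹ - (x-1)^2/(2*x^2) := by
        field_simp
      rw [he]
      have : (0:ℝ) ≤ (x-1)^2/(2*x^2) := by positivity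
      linarith
  have := hmono (Set.mem_Icc.2 ⟨le_rfl, ht⟩) (Set.mem_Icc.2 ⟨ht, le_rfl⟩) ht
  simp at this
  linarith

-- pointwise inequality
lemma pointwise_key {M a b : ℝ} (ha : 0 ≤ a) (haM : a ≤ M) (hb : 0 < b) (hbM : b ≤ M) :
    (a - b) + (a - b)^2 / (2*M) ≤ a * Real.log (a / b) := by
  have hM : 0 < M := lt_of_lt_of_le hb hbM
  rcases eq_or_lt_of_le ha with h0|h0
  · -- a = 0
    rw [← h0]
    simp
    have h1 : b^2/(2*M) ≤ b/2 := by
      rw [div_le_div_iff₀ (by positivity) (by positivity)]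
      nlinarith
    linarith
  · set L := Real.log (a / b) with hL
    rcases le_total a b with hab|hab
    · -- a ≤ b, t = a/b ≤ 1
      have ht := lemA (t := a/b) (by positivity) ((div_le_one hb).2 hab)
      have hlog : Real.log (a/b) = L := rfl
      have h1 : b * ((a/b - 1)^2/2) ≤ b * ((a/b) * L - a/b + 1) :=
        mul_le_mul_of_nonneg_left ht hb.le
      have e1 : b * ((a/b - 1)^2/2) = (a-b)^2/(2*b) := by field_simp
      have e2 : b * ((a/b) * L - a/b + 1) = a*L - a + b := by field_simp
      have h2 : (a-b)^2/(2*M) ≤ (a-b)^2/(2*b) := by gcongr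
      rw [e1, e2] at h1
      linarith
    · -- b ≤ a
      have ht := lemB (t := a/b) ((one_le_div hb).2 hab)
      have h1 : b * ((a/b - 1)^2/(2*(a/b))) ≤ b * ((a/b) * L - a/b + 1) :=
        mul_le_mul_of_nonneg_left ht hb.le
      have e1 : b * ((a/b - 1)^2/(2*(a/b))) = (a-b)^2/(2*a) := by
        field_simp
      have e2 : b * ((a/b) * L - a/b + 1) = a*L - a + b := by field_simp
      have h2 : (a-b)^2/(2*M) ≤ (a-b)^2/(2*a) := by gcongr
      rw [e1, e2] at h1
      linarith

theorem relative_entropy_lower_bound (d : ℕ) (hd : 1 ≤ d)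
    (p : EuclideanSpace ℝ (Fin d) → ℝ)
    (φ : EuclideanSpace ℝ (Fin d) → ℝ)
    (hφ : φ = fun x => (2 * π) ^ (-(d : ℝ) / 2) * Real.exp (-‖x‖ ^ 2 / 2))
    (hp_meas : Measurable p) (hp_nonneg : ∀ x, 0 ≤ p x)
    (hp_int : ∫ x, p x = 1)
    (hmoment : ∫ x, ‖x‖ ^ 2 * p x = d)
    (M : ℝ) (hM : (2 * π) ^ (-(d : ℝ) / 2) ≤ M) (hpM : ∀ x, p x ≤ M)
    (hD_int : Integrable (fun x => p x * Real.log (p x / φ x)))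
    (hΔ_int : Integrable (fun x => (p x - φ x) ^ 2)) :
    (∫ x, (p x - φ x) ^ 2) / (2 * M) ≤ ∫ x, p x * Real.log (p x / φ x) := by
  have hpi : (0:ℝ) < 2 * π := by positivity
  set C : ℝ := (2 * π) ^ (-(d : ℝ) / 2) with hC
  have hC0 : 0 < C := Real.rpow_pos_of_pos hpi _
  -- φ positive, ≤ M
  have hφ_pos : ∀ x, 0 < φ x := by intro x; rw [hφ]; positivity
  have hφM : ∀ x, φ x ≤ M := by
    intro x
    rw [hφ]
    have h1 : Real.exp (-‖x‖ ^ 2 / 2) ≤ 1 := by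
      rw [Real.exp_le_one_iff]
      have : (0:ℝ) ≤ ‖x‖^2 := by positivity
      linarith
    calc C * Real.exp (-‖x‖ ^ 2 / 2) ≤ C * 1 := by
          exact mul_le_mul_of_nonneg_left h1 hC0.le
      _ ≤ M := by rw [mul_one]; exact hM
  -- the Gaussian integral
  have hrank : Module.finrank ℝ (EuclideanSpace ℝ (Fin d)) = d := finrank_euclideanSpace_fin
  have hgauss : ∫ v : EuclideanSpace ℝ (Fin d), Real.exp (-(1/2) * ‖v‖^2)
      = (2 * π) ^ ((d:ℝ)/2) := by
    rw [GaussianFourier.integral_rexp_neg_mul_sq_norm (by norm_num : (0:ℝ) < 1/2), hrank]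
    norm_num
    have : π/(1/2) = 2*π := by ring
    rw [this]
  have hgpos : (0:ℝ) < (2 * π) ^ ((d:ℝ)/2) := Real.rpow_pos_of_pos hpi _
  have hgint : Integrable (fun v : EuclideanSpace ℝ (Fin d) => Real.exp (-(1/2) * ‖v‖^2)) := by
    by_contra h
    rw [integral_undef h] at hgauss
    exact hgpos.ne (hgauss)
  -- φ integrable with integral 1
  have hφeq : φ = fun v : EuclideanSpace ℝ (Fin d) => C * Real.exp (-(1/2) * ‖v‖^2) := by
    rw [hφ]; funext v; ring_nf
  have hφ_int : Integrable φ := by rw [hφeq]; exact hgint.const_mul C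
  have hφ_one : ∫ x, φ x = 1 := by
    rw [hφeq]
    rw [integral_const_mul, hgauss, hC, ← Real.rpow_add hpi]
    have he : (-(d:ℝ)/2 + (d:ℝ)/2) = 0 := by ring
    rw [he, Real.rpow_zero]
  -- p integrable
  have hp_integrable : Integrable p := by
    by_contra h
    rw [integral_undef h] at hp_int
    exact one_ne_zero hp_int.symm
  -- pointwise bound
  have hpt : ∀ x, (p x - φ x) + (p x - φ x)^2/(2*M) ≤ p x * Real.log (p x / φ x) := by
    intro x
    exact pointwise_key (hp_nonneg x) (hpM x) (hφ_pos x) (hφM x)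
  have hg_int : Integrable
      (fun x => (p x - φ x) + (p x - φ x)^2/(2*M)) :=
    (hp_integrable.sub hφ_int).add (hΔ_int.div_const (2*M))
  have hmain := integral_mono hg_int hD_int hpt
  have hsub : Integrable (fun x => p x - φ x) := hp_integrable.sub hφ_int
  have hdiv : Integrable (fun x => (p x - φ x)^2/(2*M)) := hΔ_int.div_const (2*M)
  have hleft : ∫ x, ((p x - φ x) + (p x - φ x)^2/(2*M))
      = (∫ x, (p x - φ x) ^ 2) / (2 * M) := by
    rw [integral_add hsub hdiv, integral_sub hp_integrable hφ_int, hp_int, hφ_one, integral_div]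
    ring
  rw [hleft] at hmain
  exact hmain
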